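/- Let u : M → ℝ be a C² function on a closed manifold M and c a cost that is locally semi-concave where finite, with the map T : M → M̄ defined by -D_x c(x,T(x)) = Du(x). If u is NOT globally c-convex (i.e., there exist x₀ and x₁ ≠ x₀ with u(x₁) + c(x₁, T(x₀)) < u(x₀) + c(x₀, T(x₀))), then the function z ↦ u(z) + c(z, T(x₀)) attains a minimum at some point z₀ ≠ x₀ where it is differentiable, and Du(z₀) + D_x c(z₀, T(x₀)) = 0 = Du(x₀) + D_x c(x₀, T(x₀)); hence T is not injective. Consequently, if T is a global diffeomorphism, then u is globally c-convex. -/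

import Mathlib

/-- Fermat's theorem on a boundaryless manifold: at a global minimum of a real-valued
function, the manifold derivative vanishes. -/
theorem min_mfderiv_zero'
    {EM : Type*} [NormedAddCommGroup EM] [NormedSpace ℝ EM]
    {HM : Type*} [TopologicalSpace HM] {IM : ModelWithCorners ℝ EM HM} [IM.Boundaryless]
    {M : Type*} [TopologicalSpace M] [ChartedSpace HM M] [IsManifold IM (⊤ : ℕ∞) M]
    (f : M → ℝ) (z₀ : M) (hmin : ∀ z, f z₀ ≤ f z) :
    mfderiv IM (modelWithCornersSelf ℝ ℝ) f z₀ = 0 := by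
  set g : EM → ℝ := f ∘ (extChartAt IM z₀).symm with hg
  have hx' : (extChartAt IM z₀).symm ((extChartAt IM z₀) z₀) = z₀ :=
    (extChartAt IM z₀).left_inv (mem_extChartAt_source (I := IM) z₀)
  have hloc : IsLocalMin g ((extChartAt IM z₀) z₀) := by
    apply Filter.Eventually.of_forall
    intro y
    simp only [hg, Function.comp_apply, hx']
    exact hmin _
  have hfd : fderiv ℝ g ((extChartAt IM z₀) z₀) = 0 := hloc.fderiv_eq_zero
  rw [mfderiv]
  split_ifs with h
  · refine (if_pos h).trans ?_
    simp only [writtenInExtChartAt, extChartAt_model_space_eq_id, PartialEquiv.refl_coe,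
      Function.comp_def, ModelWithCorners.Boundaryless.range_eq_univ, fderivWithin_univ]
    exact hfd
  · exact if_neg h

/-- On a closed manifold `M`, if `u` is `C²` (here smooth) and `T` is defined by the
critical-point relation `D(u + c(·, T x))(x) = 0`, then failure of global `c`-convexity
produces a minimum point `z₀ ≠ x₀` of `z ↦ u z + c(z, T x₀)` at which the derivative
vanishes, forcing `T z₀ = T x₀` (so `T` is not injective); consequently, if `T` is a
global diffeomorphism (in particular bijective), then `u` is globally `c`-convex. -/
theorem stmt_19
    {EM : Type*} [NormedAddCommGroup EM] [NormedSpace ℝ EM]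
    {HM : Type*} [TopologicalSpace HM] {IM : ModelWithCorners ℝ EM HM} [IM.Boundaryless]
    {M : Type*} [TopologicalSpace M] [ChartedSpace HM M] [IsManifold IM (⊤ : ℕ∞) M]
    [CompactSpace M] [T2Space M]
    {EN : Type*} [NormedAddCommGroup EN] [NormedSpace ℝ EN]
    {HN : Type*} [TopologicalSpace HN] {IN : ModelWithCorners ℝ EN HN}
    {N : Type*} [TopologicalSpace N] [ChartedSpace HN N] [IsManifold IN (⊤ : ℕ∞) N]
    (u : M → ℝ) (c : M × N → ℝ) (T : M → N)
    (hu : ContMDiff IM (modelWithCornersSelf ℝ ℝ) (⊤ : ℕ∞) u)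
    (hc : ContMDiff (IM.prod IN) (modelWithCornersSelf ℝ ℝ) (⊤ : ℕ∞) c)
    (hT : ∀ x : M,
      mfderiv IM (modelWithCornersSelf ℝ ℝ) (fun z => u z + c (z, T x)) x = 0)
    (hinj : ∀ (z : M) (y₁ y₂ : N),
      mfderiv IM (modelWithCornersSelf ℝ ℝ) (fun z' => c (z', y₁)) z =
        mfderiv IM (modelWithCornersSelf ℝ ℝ) (fun z' => c (z', y₂)) z → y₁ = y₂) :
    (¬ (∀ x₀ x₁ : M, u x₀ + c (x₀, T x₀) ≤ u x₁ + c (x₁, T x₀)) →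
      ∃ x₀ z₀ : M, z₀ ≠ x₀ ∧
        IsMinOn (fun z => u z + c (z, T x₀)) Set.univ z₀ ∧
        mfderiv IM (modelWithCornersSelf ℝ ℝ) (fun z => u z + c (z, T x₀)) z₀ = 0 ∧
        T z₀ = T x₀ ∧ ¬ Function.Injective T) ∧
    (Function.Bijective T → ∀ x₀ x₁ : M, u x₀ + c (x₀, T x₀) ≤ u x₁ + c (x₁, T x₀)) := by
  -- auxiliary facts
  have hcy : ∀ y : N, ContMDiff IM (modelWithCornersSelf ℝ ℝ) (⊤ : ℕ∞) (fun z' => c (z', y)) :=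
    fun y => hc.comp (contMDiff_id.prodMk contMDiff_const)
  have main : ¬ (∀ x₀ x₁ : M, u x₀ + c (x₀, T x₀) ≤ u x₁ + c (x₁, T x₀)) →
      ∃ x₀ z₀ : M, z₀ ≠ x₀ ∧
        IsMinOn (fun z => u z + c (z, T x₀)) Set.univ z₀ ∧
        mfderiv IM (modelWithCornersSelf ℝ ℝ) (fun z => u z + c (z, T x₀)) z₀ = 0 ∧
        T z₀ = T x₀ ∧ ¬ Function.Injective T := by
    intro h
    push_neg at h
    obtain ⟨x₀, x₁, hx₁⟩ := h
    set f : M → ℝ := fun z => u z + c (z, T x₀) with hf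
    have hcont : Continuous f := by
      have : ContMDiff IM (modelWithCornersSelf ℝ ℝ) (⊤ : ℕ∞) f :=
        ContMDiff.add hu ((hcy (T x₀)))
      exact this.continuous
    obtain ⟨z₀, -, hmin⟩ := isCompact_univ.exists_isMinOn ⟨x₀, Set.mem_univ x₀⟩
      (hcont.continuousOn)
    have hminall : ∀ z, f z₀ ≤ f z := fun z => hmin (Set.mem_univ z)
    have hzx : z₀ ≠ x₀ := by
      intro hzx
      have h1 : f z₀ ≤ f x₁ := hminall x₁
      rw [hzx] at h1
      exact absurd (lt_of_le_of_lt h1 hx₁) (lt_irrefl _)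
    have hder0 : mfderiv IM (modelWithCornersSelf ℝ ℝ) f z₀ = 0 :=
      min_mfderiv_zero' f z₀ hminall
    have h1 := mfderiv_add (I := IM) ((hu z₀).mdifferentiableAt (by simp))
      (((hcy (T x₀)) z₀).mdifferentiableAt (by simp))
    have h2 := mfderiv_add (I := IM) ((hu z₀).mdifferentiableAt (by simp))
      (((hcy (T z₀)) z₀).mdifferentiableAt (by simp))
    have e1 : mfderiv IM (modelWithCornersSelf ℝ ℝ) (u + fun z' => c (z', T x₀)) z₀ = 0 :=
      hder0
    have e2 : mfderiv IM (modelWithCornersSelf ℝ ℝ) (u + fun z' => c (z', T z₀)) z₀ = 0 :=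
      hT z₀
    have s1 := h1.symm.trans e1
    have s2 := h2.symm.trans e2
    have hB := add_left_cancel (s1.trans s2.symm)
    have hderc : mfderiv IM (modelWithCornersSelf ℝ ℝ) (fun z' => c (z', T z₀)) z₀ =
        mfderiv IM (modelWithCornersSelf ℝ ℝ) (fun z' => c (z', T x₀)) z₀ := hB.symm
    have hTz : T z₀ = T x₀ := hinj z₀ _ _ hderc
    exact ⟨x₀, z₀, hzx, hmin, hder0, hTz,
      fun hI => hzx (hI hTz)⟩
  refine ⟨main, ?_⟩
  intro hbij
  by_contra h
  obtain ⟨_, _, _, _, _, _, hnotinj⟩ := main h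
  exact hnotinj hbij.injective
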